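/- arXiv:1109.1494 — 5 statements merged into one kernel-verified Lean document; each statement's English description precedes it below -/
import Mathlib

section
/- Let P and T be integer strings of length m with m ≥ 2, and define the difference strings P_δ[j] = P[j+1] - P[j] and T_δ[j] = T[j+1] - T[j] for j ∈ {0,...,m-2}. If there exists an integer α such that the number of positions j ∈ {0,...,m-1} with α + P[j] ≠ T[j] is at most k, then the number of positions j ∈ {0,...,m-2} with P_δ[j] ≠ T_δ[j] is at most 2k. -/
open Finset

/-- If the shift-normalised Hamming distance of `P` and `T` is at most `k`, then the
difference strings have Hamming distance at most `2k`. -/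
theorem stmt_1 (m k : ℕ) (hm : 2 ≤ m) (P T : Fin m → ℤ)
    (h : ∃ α : ℤ, (Finset.univ.filter (fun j : Fin m => α + P j ≠ T j)).card ≤ k) :
    (Finset.univ.filter (fun j : Fin (m - 1) =>
        P ⟨j.1 + 1, by have := j.2; omega⟩ - P ⟨j.1, by have := j.2; omega⟩ ≠
        T ⟨j.1 + 1, by have := j.2; omega⟩ - T ⟨j.1, by have := j.2; omega⟩)).card ≤ 2 * k := by
  obtain ⟨α, hα⟩ := h
  set S := Finset.univ.filter (fun j : Fin m => α + P j ≠ T j) with hS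
  set D := Finset.univ.filter (fun j : Fin (m - 1) =>
        P ⟨j.1 + 1, by have := j.2; omega⟩ - P ⟨j.1, by have := j.2; omega⟩ ≠
        T ⟨j.1 + 1, by have := j.2; omega⟩ - T ⟨j.1, by have := j.2; omega⟩) with hD
  have hj1 : ∀ j : Fin (m-1), j.1 < m := fun j => by have := j.2; omega
  have hj2 : ∀ j : Fin (m-1), j.1 + 1 < m := fun j => by have := j.2; omega
  set D1 := D.filter (fun j : Fin (m-1) => (⟨j.1, hj1 j⟩ : Fin m) ∈ S) with hD1
  set D2 := D.filter (fun j : Fin (m-1) => (⟨j.1 + 1, hj2 j⟩ : Fin m) ∈ S) with hD2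
  have hcover : D ⊆ D1 ∪ D2 := by
    intro j hj
    simp only [hD1, hD2, Finset.mem_union, Finset.mem_filter]
    by_contra hcon
    push_neg at hcon
    have h1 : (⟨j.1, hj1 j⟩ : Fin m) ∉ S ∨ j ∉ D := by tauto
    have h2 : (⟨j.1 + 1, hj2 j⟩ : Fin m) ∉ S := (hcon.2 hj)
    have h1' : (⟨j.1, hj1 j⟩ : Fin m) ∉ S := by tauto
    simp only [hS, Finset.mem_filter, Finset.mem_univ, true_and, not_not] at h1' h2
    have hjD := hj
    simp only [hD, Finset.mem_filter, Finset.mem_univ, true_and] at hjD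
    apply hjD
    omega
  have hc1 : D1.card ≤ S.card := by
    apply Finset.card_le_card_of_injOn (fun j => (⟨j.1, hj1 j⟩ : Fin m))
    · intro j hj; exact (Finset.mem_filter.mp hj).2
    · intro a _ b _ hab
      simp only [Fin.mk.injEq] at hab
      exact Fin.ext hab
  have hc2 : D2.card ≤ S.card := by
    apply Finset.card_le_card_of_injOn (fun j => (⟨j.1 + 1, hj2 j⟩ : Fin m))
    · intro j hj; exact (Finset.mem_filter.mp hj).2
    · intro a _ b _ hab
      simp only [Fin.mk.injEq, Nat.add_right_cancel_iff] at hab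
      exact Fin.ext hab
  calc D.card ≤ (D1 ∪ D2).card := Finset.card_le_card hcover
    _ ≤ D1.card + D2.card := Finset.card_union_le _ _
    _ ≤ k + k := Nat.add_le_add (hc1.trans hα) (hc2.trans hα)
    _ = 2 * k := by ring
end

section
/- Let π be any permutation of {0,...,m-1} and let k be an integer with 6 ≤ k < m/4. Then there exist integer strings P and T of length m such that for every integer α, |{j : α + P[j] ≠ T[j]}| > k, yet |{j : P[π(j)] - P[j] ≠ T[π(j)] - T[j]}| ≤ 2k. -/
open Finset

/-- For any permutation `π` and any `k` with `6 ≤ k < m/4`, there are strings `P`, `T`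
whose shift-normalised Hamming distance exceeds `k` while the permuted difference strings
have Hamming distance at most `2k`. -/
theorem stmt_5 (m k : ℕ) (hk : 6 ≤ k) (hm : 4 * k < m) (π : Equiv.Perm (Fin m)) :
    ∃ P T : Fin m → ℤ,
      (∀ α : ℤ, k < (Finset.univ.filter (fun j : Fin m => α + P j ≠ T j)).card) ∧
      (Finset.univ.filter (fun j : Fin m =>
          P (π j) - P j ≠ T (π j) - T j)).card ≤ 2 * k := by
  have hm0 : 0 < m := by omega
  set j₀ : Fin m := ⟨0, hm0⟩ with hj₀
  -- build B ⊇ {j₀, π j₀} of card k+1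
  have hcard2 : ({j₀, π j₀} : Finset (Fin m)).card ≤ k + 1 := by
    have := Finset.card_insert_le j₀ ({π j₀} : Finset (Fin m))
    simp only [Finset.card_singleton] at this
    omega
  obtain ⟨B, hBsub, hBcard⟩ :=
    Finset.exists_superset_card_eq hcard2 (by simp [Fintype.card_fin]; omega)
  have hj0B : j₀ ∈ B := hBsub (by simp)
  have hpj0B : π j₀ ∈ B := hBsub (by simp)
  set D : Fin m → ℤ := fun j => if j ∈ B then 1 else 0 with hD
  refine ⟨fun _ => 0, D, ?_, ?_⟩
  · intro α
    by_cases h0 : α = 0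
    · have : (Finset.univ.filter (fun j : Fin m => α + 0 ≠ D j)) = B := by
        ext j
        by_cases hj : j ∈ B <;> simp [hD, hj, h0]
      rw [this, hBcard]; omega
    by_cases h1 : α = 1
    · have : (Finset.univ.filter (fun j : Fin m => α + 0 ≠ D j)) = Bᶜ := by
        ext j
        by_cases hj : j ∈ B <;> simp [hD, hj, h1]
      rw [this, Finset.card_compl, hBcard]
      simp [Fintype.card_fin]; omega
    · have : (Finset.univ.filter (fun j : Fin m => α + 0 ≠ D j)) = Finset.univ := by
        ext j
        by_cases hj : j ∈ B <;> simp [hD, hj, h0, h1] <;> omega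
      rw [this, Finset.card_univ, Fintype.card_fin]; omega
  · have hsub : (Finset.univ.filter (fun j : Fin m => (0:ℤ) - 0 ≠ D (π j) - D j)) ⊆
        (Finset.univ.filter (fun j : Fin m => j ∈ B ∧ π j ∉ B)) ∪
        (Finset.univ.filter (fun j : Fin m => j ∉ B ∧ π j ∈ B)) := by
      intro j hj
      simp only [Finset.mem_filter, Finset.mem_union, Finset.mem_univ, true_and] at hj ⊢
      by_cases h1 : j ∈ B <;> by_cases h2 : π j ∈ B <;> simp [D, h1, h2] at hj ⊢
    have h1 : (Finset.univ.filter (fun j : Fin m => j ∈ B ∧ π j ∉ B)).card ≤ k := by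
      have : (Finset.univ.filter (fun j : Fin m => j ∈ B ∧ π j ∉ B)) ⊆ B.erase j₀ := by
        intro j hj
        simp only [Finset.mem_filter, Finset.mem_univ, true_and] at hj
        refine Finset.mem_erase.2 ⟨?_, hj.1⟩
        rintro rfl; exact hj.2 hpj0B
      have := Finset.card_le_card this
      rw [Finset.card_erase_of_mem hj0B, hBcard] at this
      omega
    have h2 : (Finset.univ.filter (fun j : Fin m => j ∉ B ∧ π j ∈ B)).card ≤ k := by
      have himg : (Finset.univ.filter (fun j : Fin m => j ∉ B ∧ π j ∈ B)).image π ⊆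
          B.erase (π j₀) := by
        intro x hx
        simp only [Finset.mem_image, Finset.mem_filter, Finset.mem_univ, true_and] at hx
        obtain ⟨j, ⟨hjB, hpjB⟩, rfl⟩ := hx
        refine Finset.mem_erase.2 ⟨?_, hpjB⟩
        intro h
        exact hjB (π.injective h ▸ hj0B)
      have hc : (Finset.univ.filter (fun j : Fin m => j ∉ B ∧ π j ∈ B)).card =
          ((Finset.univ.filter (fun j : Fin m => j ∉ B ∧ π j ∈ B)).image π).card :=
        (Finset.card_image_of_injective _ π.injective).symm
      have := Finset.card_le_card himg
      rw [Finset.card_erase_of_mem hpj0B, hBcard] at this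
      omega
    calc (Finset.univ.filter (fun j : Fin m => (0:ℤ) - 0 ≠ D (π j) - D j)).card
        ≤ _ := Finset.card_le_card hsub
      _ ≤ _ := Finset.card_union_le _ _
      _ ≤ 2 * k := by omega
end

section
/- Let S be a finite set of positive integers of size s, sorted as x₁ < x₂ < ... < x_s, and construct the text T = 0^s · x₁x₂···x_s · y₁y₂···y_s · x₁x₂···x_s · y_{s+1}···y_{2s} of length 5s and pattern P = x_s x_{s-1} ··· x₁ · 0^s · 0^s of length 3s, where y_i = 2x_s + i. Then there exist a, b, c ∈ S with a + b = c if and only if there exists an alignment i ∈ {0,...,2s} and an integer α such that α + P[j] = T[i+j] for at least 2 positions j ∈ {0,...,3s-1}. -/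
open Finset

/-- 3SUM reduction to shift-normalised Hamming distance: with the text
`T = 0^s ⬝ x₀…x_{s-1} ⬝ y₁…y_s ⬝ x₀…x_{s-1} ⬝ y_{s+1}…y_{2s}` and pattern
`P = x_{s-1}…x₀ ⬝ 0^s ⬝ 0^s` (where `y_i = 2 x_{s-1} + i`), there are `a, b, c` in the set
with `a + b = c` iff some alignment admits a shift matching at least two positions. -/
theorem stmt_6 (s : ℕ) (hs : 1 ≤ s) (x : ℕ → ℤ)
    (hpos : ∀ i, i < s → 0 < x i)
    (hmono : ∀ i j, i < j → j < s → x i < x j)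
    (y : ℕ → ℤ) (hy : ∀ i, y i = 2 * x (s - 1) + i)
    (T P : ℕ → ℤ)
    (hT : ∀ j, j < 5 * s → T j =
      if j < s then 0
      else if j < 2 * s then x (j - s)
      else if j < 3 * s then y (j - 2 * s + 1)
      else if j < 4 * s then x (j - 3 * s)
      else y (j - 3 * s + 1))
    (hP : ∀ j, j < 3 * s → P j = if j < s then x (s - 1 - j) else 0) :
    (∃ ia ib ic, ia < s ∧ ib < s ∧ ic < s ∧ x ia + x ib = x ic) ↔
      (∃ i, i ≤ 2 * s ∧ ∃ α : ℤ,
        2 ≤ ((Finset.range (3 * s)).filter (fun j => α + P j = T (i + j))).card) := by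
  -- basic facts
  have hx1pos : 0 < x (s - 1) := hpos _ (by omega)
  have hxle : ∀ k, k < s → x k ≤ x (s - 1) := by
    intro k hk
    rcases eq_or_lt_of_le (by omega : k ≤ s - 1) with h | h
    · rw [h]
    · exact (hmono k (s - 1) h (by omega)).le
  have hxlty : ∀ k m : ℕ, k < s → 1 ≤ m → x k < y m := by
    intro k m hk hm
    rw [hy]
    have h1 := hxle k hk
    have h2 : (1 : ℤ) ≤ (m : ℤ) := by exact_mod_cast hm
    linarith
  have hylty : ∀ m m' : ℕ, m < m' → y m < y m' := by
    intro m m' h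
    rw [hy, hy]
    have : (m : ℤ) < (m' : ℤ) := by exact_mod_cast h
    linarith
  have hypos : ∀ m : ℕ, 0 < y m := by
    intro m
    rw [hy]
    have : (0 : ℤ) ≤ (m : ℤ) := by positivity
    linarith
  -- evaluation lemmas
  have hT0 : ∀ p, p < s → T p = 0 := by
    intro p h; rw [hT p (by omega), if_pos h]
  have hTX1 : ∀ p, s ≤ p → p < 2 * s → T p = x (p - s) := by
    intro p h1 h2; rw [hT p (by omega), if_neg (by omega), if_pos h2]
  have hTY1 : ∀ p, 2 * s ≤ p → p < 3 * s → T p = y (p - 2 * s + 1) := by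
    intro p h1 h2
    rw [hT p (by omega), if_neg (by omega), if_neg (by omega), if_pos h2]
  have hTX2 : ∀ p, 3 * s ≤ p → p < 4 * s → T p = x (p - 3 * s) := by
    intro p h1 h2
    rw [hT p (by omega), if_neg (by omega), if_neg (by omega), if_neg (by omega), if_pos h2]
  have hTY2 : ∀ p, 4 * s ≤ p → p < 5 * s → T p = y (p - 3 * s + 1) := by
    intro p h1 h2
    rw [hT p (by omega), if_neg (by omega), if_neg (by omega), if_neg (by omega),
      if_neg (by omega)]
  have hPx : ∀ j, j < s → P j = x (s - 1 - j) := by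
    intro j h; rw [hP j (by omega), if_pos h]
  have hP0 : ∀ j, s ≤ j → j < 3 * s → P j = 0 := by
    intro j h1 h2; rw [hP j h2, if_neg (by omega)]
  constructor
  · -- forward direction
    rintro ⟨ia, ib, ic, ha, hb, hc, habc⟩
    have hbc : ib < ic := by
      by_contra h
      push_neg at h
      rcases eq_or_lt_of_le h with h' | h'
      · have := hpos ia ha; rw [h'] at habc; linarith
      · have := hmono ic ib h' hb
        have := hpos ia ha
        linarith
    refine ⟨ia + ic + 1, by omega, x ib, ?_⟩
    set j0 := s - 1 - ia with hj0
    set j1 := 3 * s + ib - (ia + ic + 1) with hj1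
    have hne : j0 ≠ j1 := by omega
    have hsub : ({j0, j1} : Finset ℕ) ⊆
        (Finset.range (3 * s)).filter (fun j => x ib + P j = T (ia + ic + 1 + j)) := by
      intro j hj
      simp only [Finset.mem_insert, Finset.mem_singleton] at hj
      rcases hj with rfl | rfl
      · refine Finset.mem_filter.mpr ⟨Finset.mem_range.mpr (by omega), ?_⟩
        have h1 : P j0 = x ia := by
          rw [hPx j0 (by omega)]
          congr 1
          omega
        have h2 : ia + ic + 1 + j0 = s + ic := by omega
        have h3 : T (s + ic) = x ic := by
          rw [hTX1 (s + ic) (by omega) (by omega)]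
          congr 1
          omega
        rw [h1, h2, h3]
        linarith
      · refine Finset.mem_filter.mpr ⟨Finset.mem_range.mpr (by omega), ?_⟩
        have h1 : P j1 = 0 := hP0 j1 (by omega) (by omega)
        have h2 : ia + ic + 1 + j1 = 3 * s + ib := by omega
        have h3 : T (3 * s + ib) = x ib := by
          rw [hTX2 (3 * s + ib) (by omega) (by omega)]
          congr 1
          omega
        rw [h1, h2, h3]
        ring
    calc 2 = ({j0, j1} : Finset ℕ).card := (Finset.card_pair hne).symm
      _ ≤ _ := Finset.card_le_card hsub
  · -- backward direction
    rintro ⟨i, hi, α, hcard⟩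
    obtain ⟨a, ha, b, hb, hab⟩ := Finset.one_lt_card.mp hcard
    -- order the two matched positions
    have key : ∀ j₁ j₂, j₁ < j₂ → j₂ < 3 * s →
        α + P j₁ = T (i + j₁) → α + P j₂ = T (i + j₂) →
        ∃ ia ib ic, ia < s ∧ ib < s ∧ ic < s ∧ x ia + x ib = x ic := by
      intro j₁ j₂ hlt hj2 e1 e2
      set p := i + j₁ with hp
      set q := i + j₂ with hq
      have hpq : p < q := by omega
      have hq5 : q < 5 * s := by omega
      by_cases h1 : s ≤ j₁
      · -- both in the zero part of the pattern : impossible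
        exfalso
        rw [hP0 j₁ h1 (by omega)] at e1
        rw [hP0 j₂ (by omega) hj2] at e2
        have heq : T p = T q := by linarith
        have hps : s ≤ p := by omega
        have hqp : q - p < 2 * s := by omega
        -- case analysis on regions of p and q
        rcases (by omega : p < 2 * s ∨ (2 * s ≤ p ∧ p < 3 * s) ∨
            (3 * s ≤ p ∧ p < 4 * s) ∨ 4 * s ≤ p) with hp1 | ⟨hp1, hp2⟩ | ⟨hp1, hp2⟩ | hp1
        · rw [hTX1 p hps hp1] at heq
          rcases (by omega : q < 2 * s ∨ (2 * s ≤ q ∧ q < 3 * s) ∨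
              (3 * s ≤ q ∧ q < 4 * s) ∨ 4 * s ≤ q) with hq1 | ⟨hq1, hq2⟩ | ⟨hq1, hq2⟩ | hq1
          · rw [hTX1 q (by omega) hq1] at heq
            have := hmono (p - s) (q - s) (by omega) (by omega)
            linarith
          · rw [hTY1 q hq1 hq2] at heq
            have := hxlty (p - s) (q - 2 * s + 1) (by omega) (by omega)
            linarith
          · rw [hTX2 q hq1 hq2] at heq
            have := hmono (q - 3 * s) (p - s) (by omega) (by omega)
            linarith
          · rw [hTY2 q hq1 hq5] at heq
            have := hxlty (p - s) (q - 3 * s + 1) (by omega) (by omega)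
            linarith
        · rw [hTY1 p hp1 hp2] at heq
          rcases (by omega : (2 * s ≤ q ∧ q < 3 * s) ∨
              (3 * s ≤ q ∧ q < 4 * s) ∨ 4 * s ≤ q) with ⟨hq1, hq2⟩ | ⟨hq1, hq2⟩ | hq1
          · rw [hTY1 q hq1 hq2] at heq
            have := hylty (p - 2 * s + 1) (q - 2 * s + 1) (by omega)
            linarith
          · rw [hTX2 q hq1 hq2] at heq
            have := hxlty (q - 3 * s) (p - 2 * s + 1) (by omega) (by omega)
            linarith
          · rw [hTY2 q hq1 hq5] at heq
            have := hylty (p - 2 * s + 1) (q - 3 * s + 1) (by omega)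
            linarith
        · rw [hTX2 p hp1 hp2] at heq
          rcases (by omega : (3 * s ≤ q ∧ q < 4 * s) ∨ 4 * s ≤ q) with ⟨hq1, hq2⟩ | hq1
          · rw [hTX2 q hq1 hq2] at heq
            have := hmono (p - 3 * s) (q - 3 * s) (by omega) (by omega)
            linarith
          · rw [hTY2 q hq1 hq5] at heq
            have := hxlty (p - 3 * s) (q - 3 * s + 1) (by omega) (by omega)
            linarith
        · rw [hTY2 p hp1 (by omega)] at heq
          rw [hTY2 q (by omega) hq5] at heq
          have := hylty (p - 3 * s + 1) (q - 3 * s + 1) (by omega)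
          linarith
      · push_neg at h1
        by_cases h2 : j₂ < s
        · -- both in the x part of the pattern : impossible, T is monotone on [0,3s)
          exfalso
          rw [hPx j₁ h1] at e1
          rw [hPx j₂ h2] at e2
          have hxx : x (s - 1 - j₂) < x (s - 1 - j₁) :=
            hmono (s - 1 - j₂) (s - 1 - j₁) (by omega) (by omega)
          have hq3 : q < 3 * s := by omega
          have hmonoT : T p ≤ T q := by
            rcases (by omega : p < s ∨ (s ≤ p ∧ p < 2 * s) ∨ (2 * s ≤ p ∧ p < 3 * s)) with
              hp1 | ⟨hp1, hp2⟩ | ⟨hp1, hp2⟩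
            · rw [hT0 p hp1]
              rcases (by omega : q < s ∨ (s ≤ q ∧ q < 2 * s) ∨ (2 * s ≤ q ∧ q < 3 * s)) with
                hq1 | ⟨hq1, hq2⟩ | ⟨hq1, hq2⟩
              · rw [hT0 q hq1]
              · rw [hTX1 q hq1 hq2]; exact (hpos (q - s) (by omega)).le
              · rw [hTY1 q hq1 hq2]; exact (hypos _).le
            · rw [hTX1 p hp1 hp2]
              rcases (by omega : (s ≤ q ∧ q < 2 * s) ∨ (2 * s ≤ q ∧ q < 3 * s)) with
                ⟨hq1, hq2⟩ | ⟨hq1, hq2⟩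
              · rw [hTX1 q hq1 hq2]
                exact (hmono (p - s) (q - s) (by omega) (by omega)).le
              · rw [hTY1 q hq1 hq2]
                exact (hxlty (p - s) (q - 2 * s + 1) (by omega) (by omega)).le
            · rw [hTY1 p hp1 hp2, hTY1 q (by omega) (by omega)]
              exact (hylty (p - 2 * s + 1) (q - 2 * s + 1) (by omega)).le
          linarith
        · -- mixed case : the interesting one
          push_neg at h2
          rw [hPx j₁ h1] at e1
          rw [hP0 j₂ h2 hj2] at e2
          set ia := s - 1 - j₁ with hia
          have hiapos : 0 < x ia := hpos ia (by omega)
          have hp3 : p < 3 * s := by omega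
          have hqs : s ≤ q := by omega
          -- region of q determines α
          rcases (by omega : (s ≤ q ∧ q < 2 * s) ∨ (2 * s ≤ q ∧ q < 3 * s) ∨
              (3 * s ≤ q ∧ q < 4 * s) ∨ 4 * s ≤ q) with
            ⟨hq1, hq2⟩ | ⟨hq1, hq2⟩ | ⟨hq1, hq2⟩ | hq1
          · -- α = x (q - s)
            rw [hTX1 q hq1 hq2] at e2
            have hib : q - s < s := by omega
            have hibpos := hpos (q - s) hib
            -- T p must be an x value
            rcases (by omega : p < s ∨ (s ≤ p ∧ p < 2 * s) ∨ (2 * s ≤ p ∧ p < 3 * s)) with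
              hp1 | ⟨hp1, hp2⟩ | ⟨hp1, hp2⟩
            · exfalso; rw [hT0 p hp1] at e1; linarith
            · rw [hTX1 p hp1 hp2] at e1
              exact ⟨ia, q - s, p - s, by omega, hib, by omega, by linarith⟩
            · exfalso
              rw [hTY1 p hp1 hp2, hy] at e1
              have hia' := hxle ia (by omega)
              have hib' := hxle (q - s) hib
              have : (1 : ℤ) ≤ ((p - 2 * s + 1 : ℕ) : ℤ) := by exact_mod_cast (by omega : 1 ≤ p - 2 * s + 1)
              linarith
          · -- α = y (q - 2s + 1), impossible
            exfalso
            rw [hTY1 q hq1 hq2] at e2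
            set m := q - 2 * s + 1 with hm
            rcases (by omega : p < s ∨ (s ≤ p ∧ p < 2 * s) ∨ (2 * s ≤ p ∧ p < 3 * s)) with
              hp1 | ⟨hp1, hp2⟩ | ⟨hp1, hp2⟩
            · rw [hT0 p hp1] at e1
              have := hypos m
              linarith
            · rw [hTX1 p hp1 hp2] at e1
              have := hxlty (p - s) m (by omega) (by omega)
              linarith
            · rw [hTY1 p hp1 hp2] at e1
              rw [hy] at e1; rw [hy] at e2
              have hle : ((p - 2 * s + 1 : ℕ) : ℤ) < ((m : ℕ) : ℤ) := by
                exact_mod_cast (by omega : p - 2 * s + 1 < m)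
              linarith
          · -- α = x (q - 3s)
            rw [hTX2 q hq1 hq2] at e2
            have hib : q - 3 * s < s := by omega
            have hibpos := hpos (q - 3 * s) hib
            rcases (by omega : p < s ∨ (s ≤ p ∧ p < 2 * s) ∨ (2 * s ≤ p ∧ p < 3 * s)) with
              hp1 | ⟨hp1, hp2⟩ | ⟨hp1, hp2⟩
            · exfalso; rw [hT0 p hp1] at e1; linarith
            · rw [hTX1 p hp1 hp2] at e1
              exact ⟨ia, q - 3 * s, p - s, by omega, hib, by omega, by linarith⟩
            · exfalso
              rw [hTY1 p hp1 hp2, hy] at e1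
              have hia' := hxle ia (by omega)
              have hib' := hxle (q - 3 * s) hib
              have : (1 : ℤ) ≤ ((p - 2 * s + 1 : ℕ) : ℤ) := by exact_mod_cast (by omega : 1 ≤ p - 2 * s + 1)
              linarith
          · -- α = y (q - 3s + 1), impossible
            exfalso
            rw [hTY2 q hq1 hq5] at e2
            set m := q - 3 * s + 1 with hm
            rcases (by omega : p < s ∨ (s ≤ p ∧ p < 2 * s) ∨ (2 * s ≤ p ∧ p < 3 * s)) with
              hp1 | ⟨hp1, hp2⟩ | ⟨hp1, hp2⟩
            · rw [hT0 p hp1] at e1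
              have := hypos m
              linarith
            · rw [hTX1 p hp1 hp2] at e1
              have := hxlty (p - s) m (by omega) (by omega)
              linarith
            · rw [hTY1 p hp1 hp2] at e1
              rw [hy] at e1; rw [hy] at e2
              have hle : ((p - 2 * s + 1 : ℕ) : ℤ) < ((m : ℕ) : ℤ) := by
                exact_mod_cast (by omega : p - 2 * s + 1 < m)
              linarith
    simp only [Finset.mem_filter, Finset.mem_range] at ha hb
    rcases lt_or_gt_of_ne hab with h | h
    · exact key a b h hb.1 ha.2 hb.2
    · exact key b a h ha.1 hb.2 ha.2
end

section
/- Let P, T : Fin m → ℤ and let h = min over α ∈ ℤ of |{j : α + P[j] ≠ T[j]}| with h > m/3. Then Σ_{q=1}^{m-1} |{j : P[π_q(j)] - P[j] ≠ T[π_q(j)] - T[j]}| ≥ m²/3 - m, where π_q(j) = j + q mod m. -/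
open Finset
open Fin.NatCast

/-- If the shift-normalised Hamming distance `h` of `P, T` exceeds `m/3`, the total number
of mismatches of the permuted difference strings, summed over all nontrivial cyclic
permutations, is at least `m²/3 - m`. -/
theorem stmt_13 (m : ℕ) (hm : 0 < m) (P T : Fin m → ℤ) (h : ℕ)
    (hdef : h = sInf {c : ℕ | ∃ α : ℤ,
      c = (Finset.univ.filter (fun j : Fin m => α + P j ≠ T j)).card})
    (hh : (m : ℚ) / 3 < h) :
    (m : ℚ) ^ 2 / 3 - m ≤
      ∑ q ∈ Finset.Icc 1 (m - 1),
        ((Finset.univ.filter (fun j : Fin m =>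
          P ⟨(j.1 + q) % m, Nat.mod_lt _ hm⟩ - P j ≠
          T ⟨(j.1 + q) % m, Nat.mod_lt _ hm⟩ - T j)).card : ℚ) := by
  haveI : NeZero m := ⟨hm.ne'⟩
  set D : Fin m → ℤ := fun j => T j - P j with hD
  set g : Fin m → ℕ := fun c => (univ.filter fun j : Fin m => D (j + c) ≠ D j).card with hg
  have step1 : ∀ q ∈ Icc 1 (m - 1),
      (univ.filter (fun j : Fin m =>
        P ⟨(j.1 + q) % m, Nat.mod_lt _ hm⟩ - P j ≠
        T ⟨(j.1 + q) % m, Nat.mod_lt _ hm⟩ - T j)).card = g ((q : Fin m)) := by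
    intro q hq
    have hqm : q < m := by
      simp only [mem_Icc] at hq; omega
    rw [hg]
    congr 1
    apply filter_congr
    intro j _
    have hidx : (⟨(j.1 + q) % m, Nat.mod_lt _ hm⟩ : Fin m) = j + (q : Fin m) := by
      apply Fin.ext
      simp [Fin.add_def, Fin.val_cast_of_lt hqm]
    rw [hidx]
    simp only [hD]
    constructor <;> (intro hne heq; exact hne (by omega))
  have h0 : g 0 = 0 := by simp [hg]
  have hsum : ∑ q ∈ Icc 1 (m - 1), g ((q : Fin m)) = ∑ c : Fin m, g c := by
    have h1 : ∑ c : Fin m, g c = ∑ i ∈ Finset.range m, g ((i : Fin m)) := by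
      rw [← Fin.sum_univ_eq_sum_range (fun i => g ((i : Fin m)))]
      exact Finset.sum_congr rfl fun c _ => by rw [Fin.cast_val_eq_self]
    have h2 : Finset.range m = insert 0 (Icc 1 (m - 1)) := by
      ext x; simp [mem_Icc]; omega
    rw [h1, h2, Finset.sum_insert (by simp), Nat.cast_zero, h0, zero_add]
  have hswap : ∑ c : Fin m, g c = ∑ j : Fin m, (univ.filter fun k : Fin m => D k ≠ D j).card := by
    simp only [hg, Finset.card_filter]
    rw [Finset.sum_comm]
    refine Finset.sum_congr rfl fun j _ => ?_
    exact Fintype.sum_equiv (Equiv.addLeft j) _ _ (fun c => by simp [Equiv.addLeft])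
  have hlow : ∀ j : Fin m, h ≤ (univ.filter fun k : Fin m => D k ≠ D j).card := by
    intro j
    rw [hdef]
    apply Nat.sInf_le
    refine ⟨D j, ?_⟩
    congr 1
    apply filter_congr
    intro k _
    simp only [hD]
    constructor <;> (intro hne heq; exact hne (by omega))
  have hmh : m * h ≤ ∑ c : Fin m, g c := by
    rw [hswap]
    calc m * h = ∑ _j : Fin m, h := by simp [mul_comm]
      _ ≤ _ := Finset.sum_le_sum fun j _ => hlow j
  have hcast : ∑ q ∈ Finset.Icc 1 (m - 1),
        ((Finset.univ.filter (fun j : Fin m =>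
          P ⟨(j.1 + q) % m, Nat.mod_lt _ hm⟩ - P j ≠
          T ⟨(j.1 + q) % m, Nat.mod_lt _ hm⟩ - T j)).card : ℚ)
      = ((∑ c : Fin m, g c : ℕ) : ℚ) := by
    rw [← hsum]
    push_cast
    exact Finset.sum_congr rfl fun q hq => congrArg (Nat.cast : ℕ → ℚ) (step1 q hq)
  rw [hcast]
  have hmq : (0 : ℚ) < m := by exact_mod_cast hm
  have h1 : ((m : ℚ)) * h ≤ ((∑ c : Fin m, g c : ℕ) : ℚ) := by
    exact_mod_cast Nat.cast_le.mpr hmh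
  nlinarith [mul_lt_mul_of_pos_left hh hmq]
end

section
/- Let P, T : Fin m → ℤ with m > 6k², k ≥ 2. Suppose the shift-normalised Hamming distance h = min_α |{j : α + P[j] ≠ T[j]}| satisfies k < h ≤ 2k. Then for at least (m-1) - (h-1)h of the cyclic permutations π_q (q ∈ {1,...,m-1}), the permuted difference strings satisfy |{j : P[π_q(j)] - P[j] ≠ T[π_q(j)] - T[j]}| ≥ 2h > 2k. -/
open Finset

/-- Case 1 of the tightness lemma: if the shift-normalised Hamming distance `h` satisfies
`k < h ≤ 2k` (with `m > 6k²`, `k ≥ 2`), then at least `(m-1) - (h-1)h` of the cyclic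
permutations give permuted difference strings with at least `2h > 2k` mismatches. -/
theorem stmt_14 (m k : ℕ) (hk : 2 ≤ k) (hm : 6 * k ^ 2 < m) (P T : Fin m → ℤ) (h : ℕ)
    (hdef : h = sInf {c : ℕ | ∃ α : ℤ,
      c = (Finset.univ.filter (fun j : Fin m => α + P j ≠ T j)).card})
    (hlo : k < h) (hhi : h ≤ 2 * k) :
    (m - 1) - (h - 1) * h ≤
        ((Finset.Icc 1 (m - 1)).filter (fun q =>
          2 * h ≤ (Finset.univ.filter (fun j : Fin m =>
            P ⟨(j.1 + q) % m, Nat.mod_lt _ (by omega)⟩ - P j ≠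
            T ⟨(j.1 + q) % m, Nat.mod_lt _ (by omega)⟩ - T j)).card)).card ∧
      2 * k < 2 * h := by
  have hm0 : 0 < m := by nlinarith
  haveI : NeZero m := ⟨by omega⟩
  refine ⟨?_, by omega⟩
  obtain ⟨α, hα⟩ : ∃ α : ℤ, h = (Finset.univ.filter (fun j : Fin m => α + P j ≠ T j)).card := by
    have : h ∈ {c : ℕ | ∃ α : ℤ,
        c = (Finset.univ.filter (fun j : Fin m => α + P j ≠ T j)).card} := by
      rw [hdef]; exact Nat.sInf_mem ⟨_, ⟨0, rfl⟩⟩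
    exact this
  set M : Finset (Fin m) := Finset.univ.filter (fun j => α + P j ≠ T j) with hM
  set Bad : Finset ℕ := (((M ×ˢ M)).filter (fun p => p.1 ≠ p.2)).image
      (fun p => ((p.2 - p.1 : Fin m)).val) with hBad
  -- the diagonal of M ×ˢ M has card h
  have hdiag : ((M ×ˢ M).filter (fun p => p.1 = p.2)) = M.image (fun j => (j, j)) := by
    ext ⟨a, b⟩
    simp only [Finset.mem_filter, Finset.mem_product, Finset.mem_image, Prod.mk.injEq]
    constructor
    · rintro ⟨⟨ha, _⟩, hEq⟩; exact ⟨a, ha, rfl, hEq⟩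
    · rintro ⟨c, hc, rfl, rfl⟩; exact ⟨⟨hc, hc⟩, rfl⟩
  have hdiagcard : ((M ×ˢ M).filter (fun p => p.1 = p.2)).card = h := by
    rw [hdiag, Finset.card_image_of_injective _ (fun a b hab => (Prod.mk.injEq _ _ _ _ ▸ hab).1),
      hα]
  have hBadcard : Bad.card ≤ (h - 1) * h := by
    have h1 : (((M ×ˢ M)).filter (fun p => p.1 ≠ p.2)).card = h * h - h := by
      have hnot : (Finset.filter (fun p => p.1 ≠ p.2) (M ×ˢ M))
          = (M ×ˢ M) \ (Finset.filter (fun p => p.1 = p.2) (M ×ˢ M)) :=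
        Finset.filter_not _ _
      rw [hnot, Finset.card_sdiff_of_subset (Finset.filter_subset _ _), hdiagcard,
        Finset.card_product, ← hα]
    calc Bad.card ≤ (((M ×ˢ M)).filter (fun p => p.1 ≠ p.2)).card := Finset.card_image_le
      _ = h * h - h := h1
      _ = (h - 1) * h := by rw [Nat.sub_one_mul]
  -- every q in Icc 1 (m-1) not in Bad is good
  have key : (Finset.Icc 1 (m - 1)) \ Bad ⊆ (Finset.Icc 1 (m - 1)).filter (fun q =>
          2 * h ≤ (Finset.univ.filter (fun j : Fin m =>
            P ⟨(j.1 + q) % m, Nat.mod_lt _ (by omega)⟩ - P j ≠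
            T ⟨(j.1 + q) % m, Nat.mod_lt _ (by omega)⟩ - T j)).card) := by
    intro q hq
    rw [Finset.mem_sdiff] at hq
    obtain ⟨hq1, hq2⟩ := hq
    rw [Finset.mem_filter]
    refine ⟨hq1, ?_⟩
    rw [Finset.mem_Icc] at hq1
    set qf : Fin m := ⟨q, by omega⟩ with hqf
    have hqfval : qf.val = q := rfl
    have hmk : ∀ j : Fin m, (⟨(j.1 + q) % m, Nat.mod_lt _ (by omega)⟩ : Fin m) = j + qf := by
      intro j
      rw [Fin.ext_iff, Fin.add_def]
    have hK : ∀ j ∈ M, j + qf ∉ M := by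
      intro j hj hj'
      apply hq2
      rw [hBad, Finset.mem_image]
      refine ⟨(j, j + qf), ?_, ?_⟩
      · rw [Finset.mem_filter, Finset.mem_product]
        refine ⟨⟨hj, hj'⟩, ?_⟩
        intro hEq
        have h0 : qf = 0 := (left_eq_add.mp hEq)
        have := congrArg Fin.val h0
        rw [hqfval, Fin.val_zero] at this
        omega
      · show ((j + qf) - j).val = q
        rw [add_sub_cancel_left]
    have hinj : Function.Injective (fun j : Fin m => j - qf) := by
      intro a b hab
      simpa using congrArg (· + qf) hab
    have hdisj : Disjoint M (M.image (fun j => j - qf)) := by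
      rw [Finset.disjoint_left]
      intro a haM haI
      obtain ⟨b, hb, hba⟩ := Finset.mem_image.mp haI
      have hbval : b = a + qf := by
        rw [← hba, sub_add_cancel]
      exact hK a haM (hbval ▸ hb)
    have hsub : M ∪ M.image (fun j => j - qf) ⊆
        Finset.univ.filter (fun j : Fin m =>
            P ⟨(j.1 + q) % m, Nat.mod_lt _ (by omega)⟩ - P j ≠
            T ⟨(j.1 + q) % m, Nat.mod_lt _ (by omega)⟩ - T j) := by
      intro j hj
      rw [Finset.mem_filter]
      refine ⟨Finset.mem_univ _, ?_⟩
      rw [hmk j]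
      rw [Finset.mem_union] at hj
      rcases hj with hj | hj
      · have h1 : α + P j ≠ T j := by
          have := hj; rw [hM, Finset.mem_filter] at this; exact this.2
        have h2 : α + P (j + qf) = T (j + qf) := by
          have hnm := hK j hj
          rw [hM, Finset.mem_filter] at hnm
          push_neg at hnm
          exact hnm (Finset.mem_univ _)
        intro hc
        apply h1
        linarith
      · obtain ⟨a, ha, rfl⟩ := Finset.mem_image.mp hj
        have hcan : a - qf + qf = a := sub_add_cancel a qf
        have h1 : α + P a ≠ T a := by
          have := ha; rw [hM, Finset.mem_filter] at this; exact this.2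
        have h2 : α + P (a - qf) = T (a - qf) := by
          by_contra hc
          have hmem : a - qf ∈ M := by
            rw [hM, Finset.mem_filter]; exact ⟨Finset.mem_univ _, hc⟩
          have := hK _ hmem
          rw [hcan] at this
          exact this ha
        rw [hcan]
        intro hc
        apply h1
        linarith
    calc 2 * h = (M ∪ M.image (fun j => j - qf)).card := by
          rw [Finset.card_union_of_disjoint hdisj,
            Finset.card_image_of_injective _ hinj, ← hα]
          ring
      _ ≤ _ := Finset.card_le_card hsub
  calc (m - 1) - (h - 1) * h
      ≤ (Finset.Icc 1 (m - 1)).card - Bad.card := by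
        rw [Nat.card_Icc]
        omega
    _ ≤ ((Finset.Icc 1 (m - 1)) \ Bad).card := Finset.le_card_sdiff _ _
    _ ≤ _ := Finset.card_le_card key
end
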